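/- Let A = F[[u,v,w,x,y,z]] over a field F of characteristic p > 0, and let I = (Δ₁, Δ₂, Δ₃) with Δ₁ = vz − wy, Δ₂ = wx − uz, Δ₃ = uy − vx. For q = p^e and non-negative integers s, t with s + t ≤ q − 1, one has y^s z^t (Δ₂Δ₃)^{q−1} ∈ I^{[q]} + x^{s+t}A. -/

import Mathlib

open MvPowerSeries

lemma mem_span_of_dvd' {R : Type*} [CommRing R] {S : Set R} {a b : R}
    (ha : a ∈ S) (h : a ∣ b) : b ∈ Ideal.span S := by
  obtain ⟨c, rfl⟩ := h
  exact Ideal.mul_mem_right _ _ (Ideal.subset_span ha)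

/-- Generic combinatorial lemma in any commutative ring. -/
lemma key_span {R : Type*} [CommRing R] (u v w x y z : R) (q s t : ℕ)
    (hq : 1 ≤ q) (hst : s + t ≤ q - 1) :
    y ^ s * z ^ t * ((w * x - u * z) * (u * y - v * x)) ^ (q - 1) ∈
      Ideal.span {x ^ (s + t), u ^ q * y ^ q, u ^ q * z ^ q} := by
  set n := q - 1 with hn
  have hqn : q = n + 1 := by omega
  have h2 : w * x - u * z = w * x + (-(u * z)) := by ring
  have h3 : u * y - v * x = u * y + (-(v * x)) := by ring
  rw [mul_pow, h2, h3, add_pow, add_pow, Finset.sum_mul_sum]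
  simp only [Finset.mul_sum]
  refine Ideal.sum_mem _ fun i hi => Ideal.sum_mem _ fun j hj => ?_
  rw [Finset.mem_range] at hi hj
  have hin : i ≤ n := by omega
  have hjn : j ≤ n := by omega
  by_cases hc : s + t ≤ i + (n - j)
  · -- divisible by x^(s+t)
    refine mem_span_of_dvd' (a := x ^ (s + t)) (by simp) ?_
    have h1 : x ^ (s + t) ∣ x ^ i * x ^ (n - j) := by
      rw [← pow_add]; exact pow_dvd_pow _ hc
    refine h1.trans ⟨y ^ s * z ^ t * (w ^ i * (-(u * z)) ^ (n - i) * (n.choose i : R)) *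
      (u ^ j * y ^ j * (-v) ^ (n - j) * (n.choose j : R)), ?_⟩
    ring
  · have hji : i + 1 ≤ j := by omega
    have hu : u ^ q ∣ u ^ (n - i) * u ^ j := by
      rw [← pow_add]; exact pow_dvd_pow _ (by omega)
    by_cases hti : t ≤ i
    · -- divisible by u^q * y^q
      refine mem_span_of_dvd' (show u ^ q * y ^ q ∈ _ by simp) ?_
      have hy : y ^ q ∣ y ^ s * y ^ j := by
        rw [← pow_add]; exact pow_dvd_pow _ (by omega)
      refine (mul_dvd_mul hu hy).trans
        ⟨z ^ t * (w ^ i * x ^ i * z ^ (n - i) * (-1 : R) ^ (n - i) * (n.choose i : R)) *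
          ((-(v * x)) ^ (n - j) * (n.choose j : R)), ?_⟩
      have hz : (-(u * z)) ^ (n - i) = u ^ (n - i) * z ^ (n - i) * (-1 : R) ^ (n - i) := by
        rw [← mul_pow, ← mul_pow]; ring_nf
      rw [hz]; ring
    · -- i < t, divisible by u^q * z^q
      refine mem_span_of_dvd' (show u ^ q * z ^ q ∈ _ by simp) ?_
      have hz : z ^ q ∣ z ^ t * z ^ (n - i) := by
        rw [← pow_add]; exact pow_dvd_pow _ (by omega)
      refine (mul_dvd_mul hu hz).trans
        ⟨y ^ s * (w ^ i * x ^ i * (-1 : R) ^ (n - i) * (n.choose i : R)) *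
          (y ^ j * (-(v * x)) ^ (n - j) * (n.choose j : R)), ?_⟩
      have hz' : (-(u * z)) ^ (n - i) = u ^ (n - i) * z ^ (n - i) * (-1 : R) ^ (n - i) := by
        rw [← mul_pow, ← mul_pow]; ring_nf
      rw [hz']; ring

/-- Let `A = F[[u,v,w,x,y,z]]` over a field `F` of characteristic `p > 0`,
and `I = (Δ₁, Δ₂, Δ₃)` the ideal of 2×2 minors of the 2×3 matrix with rows `(u,v,w)` and
`(x,y,z)`: `Δ₁ = vz − wy`, `Δ₂ = wx − uz`, `Δ₃ = uy − vx`.  For `q = p^e` and non-negative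
integers `s, t` with `s + t ≤ q − 1`, one has
`y^s z^t (Δ₂Δ₃)^{q−1} ∈ I^{[q]} + x^{s+t} A`, where `I^{[q]} = (Δ₁^q, Δ₂^q, Δ₃^q)`. -/
theorem fedder_membership (F : Type*) [Field F] (p : ℕ) [Fact p.Prime] [CharP F p]
    (e : ℕ) (s t : ℕ) (hst : s + t ≤ p ^ e - 1) :
    letI A := MvPowerSeries (Fin 6) F
    letI u : A := X 0
    letI v : A := X 1
    letI w : A := X 2
    letI x : A := X 3
    letI y : A := X 4
    letI z : A := X 5
    letI Δ₁ : A := v * z - w * y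
    letI Δ₂ : A := w * x - u * z
    letI Δ₃ : A := u * y - v * x
    y ^ s * z ^ t * (Δ₂ * Δ₃) ^ (p ^ e - 1) ∈
      Ideal.span {Δ₁ ^ p ^ e, Δ₂ ^ p ^ e, Δ₃ ^ p ^ e} + Ideal.span {x ^ (s + t)} := by
  set A := MvPowerSeries (Fin 6) F with hA
  set u : A := X 0 with hu
  set v : A := X 1 with hv
  set w : A := X 2 with hw
  set x : A := X 3 with hx
  set y : A := X 4 with hy
  set z : A := X 5 with hz
  set Δ₁ : A := v * z - w * y with hD1
  set Δ₂ : A := w * x - u * z with hD2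
  set Δ₃ : A := u * y - v * x with hD3
  set q := p ^ e with hqdef
  have hq : 1 ≤ q := Nat.one_le_pow _ _ (Fact.out (p := p.Prime)).pos
  have hCinj : Function.Injective (C (σ := Fin 6) (R := F)) := fun a b h => by
    simpa [constantCoeff_C] using congrArg (constantCoeff (σ := Fin 6) (R := F)) h
  haveI : CharP A p := charP_of_injective_ringHom hCinj p
  have key := key_span u v w x y z q s t hq hst
  refine Ideal.span_le.2 ?_ key
  rintro g (rfl | rfl | rfl)
  · exact Ideal.mem_sup_right (Ideal.subset_span rfl)
  · have h3 : u ^ q * y ^ q = Δ₃ ^ q + v ^ q * x ^ q := by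
      rw [hD3, hqdef, sub_pow_char_pow, mul_pow, mul_pow]; ring
    rw [h3]
    refine Ideal.add_mem _
      (Ideal.mem_sup_left (Ideal.subset_span (by right; right; rfl))) ?_
    refine Ideal.mem_sup_right (mem_span_of_dvd' rfl ?_)
    exact Dvd.dvd.mul_left (pow_dvd_pow _ (by omega)) _
  · have h2 : u ^ q * z ^ q = w ^ q * x ^ q - Δ₂ ^ q := by
      rw [hD2, hqdef, sub_pow_char_pow, mul_pow, mul_pow]; ring
    rw [h2, sub_eq_add_neg]
    refine Ideal.add_mem _ ?_ (neg_mem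
      (Ideal.mem_sup_left (Ideal.subset_span (by right; left; rfl))))
    refine Ideal.mem_sup_right (mem_span_of_dvd' rfl ?_)
    exact Dvd.dvd.mul_left (pow_dvd_pow _ (by omega)) _
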